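/- arXiv:1801.03612 — 5 statements merged into one kernel-verified Lean document; each statement's English description precedes it below -/
import Mathlib

section
/- Absolute continuity of the extended distributions: if π(z) > 0 implies p(z;x) > 0, and p(τ;x,z) > 0 implies p(τ;x) > 0 for all τ ≅_O z, then π(z, τ_{1:K}) > 0 implies q(z, τ_{1:K}) > 0, where π and q are the extended target and extended proposal distributions. -/
/-- Absolute continuity of the extended distributions.  If
`π(z) > 0 → p(z;x) > 0` (where `p(z;x) = ∑_{τ ≅_O z} p(τ;x)`), and
`p(τ;x,z) > 0 → p(τ;x) > 0` for all traces `τ ≅_O z`, then positivity of the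
extended target `π(z,τ_{1:K}) = π(z) ∏_i p(τ_i;x,z)` implies positivity of the
extended proposal `q(z,τ_{1:K}) = (1/K) ∑_k p(τ_k;x) ∏_{i≠k} p(τ_i;x,z)`
(defined to be `0` unless `τ_j ≅_O z` for all `j`).  Here
`p(τ;x,z) > 0 → out τ = z`. -/
theorem stmt7_absolute_continuity
    {Z T : Type} [Fintype Z] [Fintype T] [DecidableEq Z]
    (K : ℕ) (hK : 0 < K)
    (p : T → ℝ) (out : T → Z) (pz : Z → T → ℝ) (pi : Z → ℝ)
    (hp_nonneg : ∀ τ, 0 ≤ p τ)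
    (hpz_nonneg : ∀ z τ, 0 ≤ pz z τ)
    (hpz_supp : ∀ z τ, 0 < pz z τ → out τ = z)
    (hpi_abs : ∀ z, 0 < pi z →
      0 < ∑ τ ∈ Finset.univ.filter (fun τ => out τ = z), p τ)
    (habs : ∀ z τ, 0 < pz z τ → 0 < p τ) :
    ∀ (z : Z) (t : Fin K → T),
      0 < pi z * ∏ i, pz z (t i) →
      0 < (if ∀ j, out (t j) = z then
            (K : ℝ)⁻¹ * ∑ k, p (t k) * ∏ i ∈ Finset.univ.erase k, pz z (t i)
          else 0) := by
  intro z t h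
  have hprod : 0 < ∏ i, pz z (t i) := by
    rcases (Finset.prod_nonneg (fun i _ => hpz_nonneg z (t i))).lt_or_eq with h'|h'
    · exact h'
    · exfalso; rw [← h', mul_zero] at h; exact lt_irrefl 0 h
  have heach : ∀ i : Fin K, 0 < pz z (t i) := by
    intro i
    rcases (hpz_nonneg z (t i)).lt_or_eq with h'|h'
    · exact h'
    · exfalso
      have : (∏ j, pz z (t j)) = 0 :=
        Finset.prod_eq_zero (Finset.mem_univ i) h'.symm
      rw [this] at hprod; exact lt_irrefl 0 hprod
  have hout : ∀ j, out (t j) = z := fun j => hpz_supp z (t j) (heach j)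
  rw [if_pos hout]
  apply mul_pos (by positivity)
  apply Finset.sum_pos
  · intro k _
    exact mul_pos (habs z (t k) (heach k))
      (Finset.prod_pos (fun i _ => heach i))
  · exact Finset.univ_nonempty_iff.mpr ⟨⟨0, hK⟩⟩
end

section
/- The Metropolis–Hastings acceptance ratio on the extended space simplifies: with z' = ζ, ζ' = z, ζ = τ_k|_O, ζ' = τ'_{k'}|_O, one has [π(z',ζ',k',τ'_{1:K}) q(z,ζ,k,τ_{1:K}; z',ζ',k',τ'_{1:K})] / [π(z,ζ,k,τ_{1:K}) q(z',ζ',k',τ'_{1:K}; z,ζ,k,τ_{1:K})] = [π(z')·(1/K)Σ_{j=1}^K p_O(τ'_j; ζ)] / [π(z)·(1/K)Σ_{j=1}^K p_O(τ_j; z)]. -/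
/-- The Metropolis–Hastings acceptance ratio on the extended space
simplifies.  Extended target
`π(z,ζ,k,τ_{1:K}) = π(z)·(1/K)·p(τ_k;z)·δ(ζ,τ_k|_O)·∏_{i≠k} p(τ_i;z,ζ)` and
extended proposal kernel
`q(z',ζ',k',τ'_{1:K}; z,ζ,k,τ_{1:K}) = δ(z';ζ)·δ(ζ';z)·(∏_j p(τ'_j;ζ,z))·
p_O(τ'_{k'};ζ) / ∑_j p_O(τ'_j;ζ)`.  Here `pp x τ = p(τ;x)` is the program run on
input `x`, `pc x w τ = p(τ;x,w)` its distribution with outputs fixed to `w`,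
`pO x τ = p_O(τ;x)`, with `pp x τ = pO x τ · pc x w τ` whenever `out τ = w`.
With `z' = ζ`, `ζ' = z`, `ζ = τ_k|_O`, `ζ' = τ'_{k'}|_O`, and all relevant
quantities positive, the ratio
`[π(z',ζ',k',τ') q(z,ζ,k,τ; z',ζ',k',τ')] / [π(z,ζ,k,τ) q(z',ζ',k',τ'; z,ζ,k,τ)]`
equals `[π(z')·(1/K)∑_j p_O(τ'_j;ζ)] / [π(z)·(1/K)∑_j p_O(τ_j;z)]`. -/
theorem stmt9_mh_acceptance_ratio
    {Z T : Type} [Fintype Z] [Fintype T]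
    (K : ℕ) (hK : 0 < K)
    (pi : Z → ℝ) (out : T → Z)
    (pp : Z → T → ℝ) (pc : Z → Z → T → ℝ) (pO : Z → T → ℝ)
    (hfact : ∀ x w τ, out τ = w → pp x τ = pO x τ * pc x w τ)
    (z ζ z' ζ' : Z) (k k' : Fin K) (t t' : Fin K → T)
    (hz' : z' = ζ) (hζ' : ζ' = z)
    (hout_k : out (t k) = ζ) (hout_k' : out (t' k') = ζ')
    (hpi_z : 0 < pi z) (hpi_z' : 0 < pi z')
    (hpc_t : ∀ i, 0 < pc z ζ (t i))
    (hpc_t' : ∀ i, 0 < pc z' ζ' (t' i))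
    (hpO_t : ∀ j, 0 < pO z (t j))
    (hpO_t' : ∀ j, 0 < pO z' (t' j)) :
    (pi z' * ((K : ℝ)⁻¹ * pp z' (t' k')) * (∏ i ∈ Finset.univ.erase k', pc z' ζ' (t' i))
        * ((∏ j, pc ζ' z' (t j)) * (pO z (t k) / ∑ j, pO z (t j))))
      / (pi z * ((K : ℝ)⁻¹ * pp z (t k)) * (∏ i ∈ Finset.univ.erase k, pc z ζ (t i))
        * ((∏ j, pc ζ z (t' j)) * (pO z' (t' k') / ∑ j, pO z' (t' j))))
    = (pi z' * ((K : ℝ)⁻¹ * ∑ j, pO z' (t' j)))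
      / (pi z * ((K : ℝ)⁻¹ * ∑ j, pO z (t j))) := by
  subst z' ζ'
  rw [hfact z ζ (t k) hout_k, hfact ζ z (t' k') hout_k']
  have hS : (0:ℝ) < ∑ j, pO z (t j) := Finset.sum_pos (fun j _ => hpO_t j) ⟨k, Finset.mem_univ k⟩
  have hS' : (0:ℝ) < ∑ j, pO ζ (t' j) := Finset.sum_pos (fun j _ => hpO_t' j) ⟨k', Finset.mem_univ k'⟩
  have hP : (0:ℝ) < ∏ i ∈ Finset.univ.erase k, pc z ζ (t i) :=
    Finset.prod_pos (fun i _ => hpc_t i)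
  have hP' : (0:ℝ) < ∏ i ∈ Finset.univ.erase k', pc ζ z (t' i) :=
    Finset.prod_pos (fun i _ => hpc_t' i)
  have hQ : (∏ j, pc z ζ (t j)) = pc z ζ (t k) * ∏ i ∈ Finset.univ.erase k, pc z ζ (t i) :=
    (Finset.mul_prod_erase _ _ (Finset.mem_univ k)).symm
  have hQ' : (∏ j, pc ζ z (t' j)) = pc ζ z (t' k') * ∏ i ∈ Finset.univ.erase k', pc ζ z (t' i) :=
    (Finset.mul_prod_erase _ _ (Finset.mem_univ k')).symm
  rw [hQ, hQ']
  set W : ℝ := (pO ζ (t' k') * pc ζ z (t' k') * ∏ i ∈ Finset.univ.erase k', pc ζ z (t' i))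
      * (pc z ζ (t k) * ∏ i ∈ Finset.univ.erase k, pc z ζ (t i)) * pO z (t k)
      / ((∑ j, pO z (t j)) * (∑ j, pO ζ (t' j))) with hW
  have hWpos : 0 < W := by
    apply div_pos
    · exact mul_pos (mul_pos (mul_pos (mul_pos (hpO_t' k') (hpc_t' k')) hP')
        (mul_pos (hpc_t k) hP)) (hpO_t k)
    · exact mul_pos hS hS'
  have hnum : pi ζ * ((K : ℝ)⁻¹ * (pO ζ (t' k') * pc ζ z (t' k')))
      * (∏ i ∈ Finset.univ.erase k', pc ζ z (t' i))
      * ((pc z ζ (t k) * ∏ i ∈ Finset.univ.erase k, pc z ζ (t i))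
        * (pO z (t k) / ∑ j, pO z (t j)))
      = (pi ζ * ((K : ℝ)⁻¹ * ∑ j, pO ζ (t' j))) * W := by
    rw [hW]; field_simp
  have hden : pi z * ((K : ℝ)⁻¹ * (pO z (t k) * pc z ζ (t k)))
      * (∏ i ∈ Finset.univ.erase k, pc z ζ (t i))
      * ((pc ζ z (t' k') * ∏ i ∈ Finset.univ.erase k', pc ζ z (t' i))
        * (pO ζ (t' k') / ∑ j, pO ζ (t' j)))
      = (pi z * ((K : ℝ)⁻¹ * ∑ j, pO z (t j))) * W := by
    rw [hW]; field_simp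
  rw [hnum, hden, mul_div_mul_right _ _ hWpos.ne']
end

section
/- The transition operator of Algorithm 2 (Metropolis–Hastings with proposal probability estimates ξ̂', ξ̂_{t-1} computed from K auxiliary executions, and acceptance probability min{1, π̃(z')ξ̂_{t-1} / (π̃(z_{t-1})ξ̂')}) admits π as a stationary distribution: if z_{t-1} ~ π, then z_t ~ π. -/
set_option linter.unusedSectionVars false
set_option maxHeartbeats 1000000
namespace Stmt11Aux

variable {Z T : Type} [Fintype Z] [Fintype T] [DecidableEq Z]

/-- proposal density estimate -/
noncomputable def Sest (K : ℕ) (pO : Z → T → ℝ) (x : Z) (t : Fin K → T) : ℝ :=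
  (K : ℝ)⁻¹ * ∑ j, pO x (t j)

/-- joint density of the auxiliary randomness -/
noncomputable def Aker (K : ℕ) (out : T → Z) (pp : Z → T → ℝ) (pc : Z → Z → T → ℝ)
    (z ζ : Z) (k : Fin K) (t t' : Fin K → T) : ℝ :=
  (K : ℝ)⁻¹ * pp z (t k) * (if out (t k) = ζ then 1 else 0)
    * (∏ i ∈ Finset.univ.erase k, pc z ζ (t i))
    * (∏ j, pc ζ z (t' j))

/-- acceptance probability -/
noncomputable def acc (K : ℕ) (pi : Z → ℝ) (c : ℝ) (pO : Z → T → ℝ)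
    (z ζ : Z) (t t' : Fin K → T) : ℝ :=
  min 1 ((c * pi ζ) * ((K : ℝ)⁻¹ * ∑ j, pO ζ (t' j))
      / ((c * pi z) * ((K : ℝ)⁻¹ * ∑ j, pO z (t j))))

theorem Sest_pos (K : ℕ) (hK : 0 < K) (pO : Z → T → ℝ) (hpO : ∀ x τ, 0 < pO x τ)
    (x : Z) (t : Fin K → T) : 0 < Sest K pO x t := by
  haveI : Nonempty (Fin K) := Fin.pos_iff_nonempty.mp hK
  have h1 : (0:ℝ) < (K:ℝ)⁻¹ := by positivity
  have h2 : (0:ℝ) < ∑ j, pO x (t j) :=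
    Finset.sum_pos (fun j _ => hpO x (t j)) Finset.univ_nonempty
  exact mul_pos h1 h2

/-- sum over a tuple of a product factorizes -/
theorem sum_tuple_prod (K : ℕ) (g : Fin K → T → ℝ) :
    ∑ t : Fin K → T, ∏ i, g i (t i) = ∏ i, ∑ τ, g i τ :=
  (Fintype.prod_sum g).symm

/-- key detailed-balance pointwise identity -/
theorem key (K : ℕ) (hK : 0 < K) (pi : Z → ℝ) (c : ℝ) (hc : 0 < c)
    (out : T → Z) (pp : Z → T → ℝ) (pc : Z → Z → T → ℝ) (pO : Z → T → ℝ)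
    (hpi_pos : ∀ z, 0 < pi z)
    (hpc_nonneg : ∀ x w τ, 0 ≤ pc x w τ)
    (hpc_supp : ∀ x w τ, 0 < pc x w τ → out τ = w)
    (hpO_pos : ∀ x τ, 0 < pO x τ)
    (hfact : ∀ x w τ, out τ = w → pp x τ = pO x τ * pc x w τ)
    (z ζ : Z) (t t' : Fin K → T) :
    pi z * ∑ k : Fin K, Aker K out pp pc z ζ k t t' * acc K pi c pO z ζ t t'
      = (∏ i, pc z ζ (t i)) * (∏ j, pc ζ z (t' j))
        * min (pi z * Sest K pO z t) (pi ζ * Sest K pO ζ t') := by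
  have hSz : 0 < Sest K pO z t := Sest_pos K hK pO hpO_pos z t
  have hSζ : 0 < Sest K pO ζ t' := Sest_pos K hK pO hpO_pos ζ t'
  by_cases hall : ∀ i, out (t i) = ζ
  · have hacc : acc K pi c pO z ζ t t'
        = min 1 (pi ζ * Sest K pO ζ t' / (pi z * Sest K pO z t)) := by
      unfold acc Sest
      rw [mul_assoc c, mul_assoc c, mul_div_mul_left _ _ (ne_of_gt hc)]
    have hA : ∀ k : Fin K, Aker K out pp pc z ζ k t t'
        = (K : ℝ)⁻¹ * pO z (t k)
          * ((∏ i, pc z ζ (t i)) * (∏ j, pc ζ z (t' j))) := by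
      intro k
      unfold Aker
      rw [if_pos (hall k), hfact z ζ (t k) (hall k),
        ← Finset.mul_prod_erase Finset.univ (fun i => pc z ζ (t i)) (Finset.mem_univ k)]
      ring
    have hsum : ∑ k : Fin K, Aker K out pp pc z ζ k t t' * acc K pi c pO z ζ t t'
        = Sest K pO z t * ((∏ i, pc z ζ (t i)) * (∏ j, pc ζ z (t' j)))
            * acc K pi c pO z ζ t t' := by
      rw [Finset.sum_congr rfl (fun k _ => by rw [hA k]), ← Finset.sum_mul,
        ← Finset.sum_mul, ← Finset.mul_sum]
      rfl
    rw [hsum, hacc]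
    have ha : (0:ℝ) < pi z * Sest K pO z t := mul_pos (hpi_pos z) hSz
    have hmin : (pi z * Sest K pO z t)
        * min 1 (pi ζ * Sest K pO ζ t' / (pi z * Sest K pO z t))
        = min (pi z * Sest K pO z t) (pi ζ * Sest K pO ζ t') := by
      rw [mul_min_of_nonneg _ _ ha.le, mul_one,
        ← mul_div_assoc, mul_div_cancel_left₀ _ (ne_of_gt ha)]
    calc pi z * (Sest K pO z t * ((∏ i, pc z ζ (t i)) * (∏ j, pc ζ z (t' j)))
          * min 1 (pi ζ * Sest K pO ζ t' / (pi z * Sest K pO z t)))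
        = ((∏ i, pc z ζ (t i)) * (∏ j, pc ζ z (t' j)))
            * ((pi z * Sest K pO z t)
              * min 1 (pi ζ * Sest K pO ζ t' / (pi z * Sest K pO z t))) := by ring
      _ = _ := by rw [hmin]
  · push_neg at hall
    obtain ⟨i0, hi0⟩ := hall
    have hpc0 : pc z ζ (t i0) = 0 := by
      rcases (hpc_nonneg z ζ (t i0)).eq_or_lt with h | h
      · exact h.symm
      · exact absurd (hpc_supp z ζ (t i0) h) hi0
    have hR : (∏ i, pc z ζ (t i)) = 0 :=
      Finset.prod_eq_zero (Finset.mem_univ i0) hpc0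
    have hL : ∑ k : Fin K, Aker K out pp pc z ζ k t t' * acc K pi c pO z ζ t t' = 0 := by
      apply Finset.sum_eq_zero
      intro k _
      by_cases hk : k = i0
      · subst hk
        unfold Aker
        rw [if_neg hi0]
        ring
      · have hmem : i0 ∈ Finset.univ.erase k :=
          Finset.mem_erase.mpr ⟨fun h => hk h.symm, Finset.mem_univ i0⟩
        unfold Aker
        rw [Finset.prod_eq_zero hmem hpc0]
        ring
    rw [hL, hR]
    ring

/-- total mass of the auxiliary kernel is 1 -/
theorem mass (K : ℕ) (hK : 0 < K)
    (out : T → Z) (pp : Z → T → ℝ) (pc : Z → Z → T → ℝ)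
    (hpp_sum : ∀ x, ∑ τ, pp x τ = 1)
    (hpc_sum : ∀ x w, ∑ τ, pc x w τ = 1)
    (z : Z) :
    ∑ ζ, ∑ k : Fin K, ∑ t : Fin K → T, ∑ t' : Fin K → T,
      Aker K out pp pc z ζ k t t' = 1 := by
  have hstep : ∀ (ζ : Z) (k : Fin K),
      ∑ t : Fin K → T, ∑ t' : Fin K → T, Aker K out pp pc z ζ k t t'
        = (K : ℝ)⁻¹ * ∑ τ, pp z τ * (if out τ = ζ then 1 else 0) := by
    intro ζ k
    have ht' : ∑ t' : Fin K → T, ∏ j, pc ζ z (t' j) = 1 := by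
      rw [sum_tuple_prod]
      simp [hpc_sum]
    have hg : ∀ t : Fin K → T,
        pp z (t k) * (if out (t k) = ζ then 1 else 0)
            * ∏ i ∈ Finset.univ.erase k, pc z ζ (t i)
          = ∏ i, (if i = k then pp z (t i) * (if out (t i) = ζ then 1 else 0)
              else pc z ζ (t i)) := by
      intro t
      rw [← Finset.mul_prod_erase Finset.univ
        (fun i => if i = k then pp z (t i) * (if out (t i) = ζ then 1 else 0)
          else pc z ζ (t i)) (Finset.mem_univ k)]
      congr 1
      · simp
      · exact Finset.prod_congr rfl (fun i hi => by
          simp [(Finset.mem_erase.mp hi).1])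
    have hAt : ∀ t : Fin K → T,
        ∑ t' : Fin K → T, Aker K out pp pc z ζ k t t'
          = (K : ℝ)⁻¹ * ∏ i, (if i = k then
              pp z (t i) * (if out (t i) = ζ then 1 else 0) else pc z ζ (t i)) := by
      intro t
      unfold Aker
      rw [← Finset.mul_sum, ht', mul_one, ← hg t]
      ring
    have hfac : ∑ t : Fin K → T, ∏ i, (if i = k then
          pp z (t i) * (if out (t i) = ζ then 1 else 0) else pc z ζ (t i))
        = ∏ i : Fin K, ∑ τ, (if i = k then
            pp z τ * (if out τ = ζ then 1 else 0) else pc z ζ τ) :=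
      sum_tuple_prod K (fun i τ => if i = k then
        pp z τ * (if out τ = ζ then 1 else 0) else pc z ζ τ)
    rw [Finset.sum_congr rfl (fun t _ => hAt t), ← Finset.mul_sum, hfac]
    congr 1
    rw [← Finset.mul_prod_erase Finset.univ
      (fun i => ∑ τ, (if i = k then pp z τ * (if out τ = ζ then 1 else 0)
        else pc z ζ τ)) (Finset.mem_univ k)]
    have h1 : ∀ i ∈ Finset.univ.erase k,
        (∑ τ, (if i = k then pp z τ * (if out τ = ζ then 1 else 0)
          else pc z ζ τ)) = 1 := by
      intro i hi
      simp [(Finset.mem_erase.mp hi).1, hpc_sum]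
    rw [Finset.prod_congr rfl h1, Finset.prod_const_one, mul_one]
    simp
  have hKne : ((K : ℝ)) ≠ 0 := Nat.cast_ne_zero.mpr (Nat.pos_iff_ne_zero.mp hK)
  calc ∑ ζ, ∑ k : Fin K, ∑ t : Fin K → T, ∑ t' : Fin K → T,
        Aker K out pp pc z ζ k t t'
      = ∑ ζ, ∑ k : Fin K, (K : ℝ)⁻¹ * ∑ τ, pp z τ * (if out τ = ζ then 1 else 0) := by
        exact Finset.sum_congr rfl (fun ζ _ => Finset.sum_congr rfl (fun k _ => hstep ζ k))
    _ = ∑ ζ, ∑ τ, pp z τ * (if out τ = ζ then 1 else 0) := by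
        apply Finset.sum_congr rfl
        intro ζ _
        rw [Finset.sum_const, Finset.card_univ, Fintype.card_fin, nsmul_eq_mul,
          ← mul_assoc, mul_inv_cancel₀ hKne, one_mul]
    _ = ∑ τ, pp z τ * ∑ ζ, (if out τ = ζ then 1 else 0) := by
        rw [Finset.sum_comm]
        exact Finset.sum_congr rfl (fun τ _ => by rw [Finset.mul_sum])
    _ = ∑ τ, pp z τ := by
        apply Finset.sum_congr rfl
        intro τ _
        rw [Finset.sum_ite_eq Finset.univ (out τ) (fun _ => (1:ℝ)),
          if_pos (Finset.mem_univ _), mul_one]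
    _ = 1 := hpp_sum z

end Stmt11Aux


open Stmt11Aux


/-- Theorem 2: The transition operator of Algorithm 2
(Metropolis–Hastings using proposal-probability estimates) admits `π` as a
stationary distribution.  Given the previous iterate `z`, SIMULATE draws
`k ~ Uniform{1..K}`, `τ_k ~ p(·;z)`, sets `ζ = τ_k|_O`, draws `τ_i ~ p(·;z,ζ)`
for `i ≠ k`, and returns `ξ̂' = (1/K)∑_j p_O(τ_j;z)`; ASSESS draws
`τ'_j ~ p(·;ζ,z)` for `j = 1..K` and returns `ξ̂_{t-1} = (1/K)∑_j p_O(τ'_j;ζ)`;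
the move to `ζ` is accepted with probability
`min{1, π̃(ζ)·ξ̂_{t-1} / (π̃(z)·ξ̂')}` where `π̃ = c·π`, `c > 0`.  Here
`pp x τ = p(τ;x)`, `pc x w τ = p(τ;x,w)` (supported on `out τ = w`),
`pp x τ = pO x τ · pc x w τ` for `out τ = w`, and all relevant probabilities are
positive.  The induced transition kernel `Tk z z'` (marginalizing `ζ, k, τ, τ'`
and combining accept/reject) satisfies `∑_z π(z)·Tk z z' = π(z')`:
if `z_{t-1} ~ π` then `z_t ~ π`. -/
theorem stmt11_algorithm2_stationary
    {Z T : Type} [Fintype Z] [Fintype T] [DecidableEq Z]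
    (K : ℕ) (hK : 0 < K)
    (pi : Z → ℝ) (c : ℝ) (hc : 0 < c)
    (out : T → Z)
    (pp : Z → T → ℝ) (pc : Z → Z → T → ℝ) (pO : Z → T → ℝ)
    (hpi_pos : ∀ z, 0 < pi z) (hpi_sum : ∑ z, pi z = 1)
    (hpp_pos : ∀ x τ, 0 < pp x τ) (hpp_sum : ∀ x, ∑ τ, pp x τ = 1)
    (hpc_nonneg : ∀ x w τ, 0 ≤ pc x w τ) (hpc_sum : ∀ x w, ∑ τ, pc x w τ = 1)
    (hpc_supp : ∀ x w τ, 0 < pc x w τ → out τ = w)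
    (hpc_pos : ∀ x w τ, out τ = w → 0 < pc x w τ)
    (hpO_pos : ∀ x τ, 0 < pO x τ)
    (hfact : ∀ x w τ, out τ = w → pp x τ = pO x τ * pc x w τ) :
    ∀ z' : Z,
      ∑ z, pi z *
        (∑ ζ, ∑ k : Fin K, ∑ t : Fin K → T, ∑ t' : Fin K → T,
          ((K : ℝ)⁻¹ * pp z (t k) * (if out (t k) = ζ then 1 else 0)
              * (∏ i ∈ Finset.univ.erase k, pc z ζ (t i))
              * (∏ j, pc ζ z (t' j)))
            * ((if ζ = z' then 1 else 0)
                  * min 1 ((c * pi ζ) * ((K : ℝ)⁻¹ * ∑ j, pO ζ (t' j))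
                      / ((c * pi z) * ((K : ℝ)⁻¹ * ∑ j, pO z (t j))))
                + (if z = z' then 1 else 0)
                  * (1 - min 1 ((c * pi ζ) * ((K : ℝ)⁻¹ * ∑ j, pO ζ (t' j))
                      / ((c * pi z) * ((K : ℝ)⁻¹ * ∑ j, pO z (t j)))))))
      = pi z' := by
  intro z'
  classical
  show (∑ z, pi z * ∑ ζ, ∑ k : Fin K, ∑ t : Fin K → T, ∑ t' : Fin K → T,
      Aker K out pp pc z ζ k t t' *
        ((if ζ = z' then 1 else 0) * acc K pi c pO z ζ t t'
          + (if z = z' then 1 else 0) * (1 - acc K pi c pO z ζ t t'))) = pi z'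
  -- reorder sums so that k is innermost
  have hswap : ∀ a b : Z,
      (∑ k : Fin K, ∑ t : Fin K → T, ∑ t' : Fin K → T,
        Aker K out pp pc a b k t t' * acc K pi c pO a b t t')
      = ∑ t : Fin K → T, ∑ t' : Fin K → T, ∑ k : Fin K,
          Aker K out pp pc a b k t t' * acc K pi c pO a b t t' := by
    intro a b
    rw [Finset.sum_comm]
    exact Finset.sum_congr rfl (fun t _ => Finset.sum_comm)
  -- detailed balance
  have hDB : ∀ z ζ : Z,
      pi z * ∑ k : Fin K, ∑ t : Fin K → T, ∑ t' : Fin K → T,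
        Aker K out pp pc z ζ k t t' * acc K pi c pO z ζ t t'
      = pi ζ * ∑ k : Fin K, ∑ t : Fin K → T, ∑ t' : Fin K → T,
          Aker K out pp pc ζ z k t t' * acc K pi c pO ζ z t t' := by
    intro z ζ
    have hgen : ∀ a b : Z,
        pi a * ∑ t : Fin K → T, ∑ t' : Fin K → T, ∑ k : Fin K,
          Aker K out pp pc a b k t t' * acc K pi c pO a b t t'
        = ∑ t : Fin K → T, ∑ t' : Fin K → T,
            (∏ i, pc a b (t i)) * (∏ j, pc b a (t' j))
              * min (pi a * Sest K pO a t) (pi b * Sest K pO b t') := by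
      intro a b
      rw [Finset.mul_sum]
      refine Finset.sum_congr rfl (fun t _ => ?_)
      rw [Finset.mul_sum]
      refine Finset.sum_congr rfl (fun t' _ => ?_)
      exact key K hK pi c hc out pp pc pO hpi_pos hpc_nonneg hpc_supp hpO_pos hfact a b t t'
    rw [hswap z ζ, hswap ζ z, hgen z ζ, hgen ζ z, Finset.sum_comm]
    refine Finset.sum_congr rfl fun t _ => Finset.sum_congr rfl fun t' _ => ?_
    rw [min_comm]
    ring
  -- split the summand into accept and reject parts
  have hdist : ∀ (z ζ : Z) (k : Fin K) (t t' : Fin K → T),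
      Aker K out pp pc z ζ k t t' *
        ((if ζ = z' then 1 else 0) * acc K pi c pO z ζ t t'
          + (if z = z' then 1 else 0) * (1 - acc K pi c pO z ζ t t'))
      = (if ζ = z' then 1 else 0)
          * (Aker K out pp pc z ζ k t t' * acc K pi c pO z ζ t t')
        + (if z = z' then 1 else 0)
          * (Aker K out pp pc z ζ k t t'
              - Aker K out pp pc z ζ k t t' * acc K pi c pO z ζ t t') := by
    intros; ring
  have hinner : ∀ z : Z,
      (∑ ζ, ∑ k : Fin K, ∑ t : Fin K → T, ∑ t' : Fin K → T,
        Aker K out pp pc z ζ k t t' *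
          ((if ζ = z' then 1 else 0) * acc K pi c pO z ζ t t'
            + (if z = z' then 1 else 0) * (1 - acc K pi c pO z ζ t t')))
      = (∑ k : Fin K, ∑ t : Fin K → T, ∑ t' : Fin K → T,
          Aker K out pp pc z z' k t t' * acc K pi c pO z z' t t')
        + (if z = z' then 1 else 0)
          * (1 - ∑ ζ, ∑ k : Fin K, ∑ t : Fin K → T, ∑ t' : Fin K → T,
              Aker K out pp pc z ζ k t t' * acc K pi c pO z ζ t t') := by
    intro z
    simp only [hdist, Finset.sum_add_distrib, ← Finset.mul_sum]
    congr 1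
    · -- accept part: indicator picks ζ = z'
      rw [Finset.sum_eq_single z']
      · simp
      · intro ζ _ hζ; simp [hζ]
      · intro h; exact absurd (Finset.mem_univ z') h
    · -- reject part
      by_cases hz : z = z'
      · subst hz
        congr 1
        simp only [Finset.sum_sub_distrib]
        rw [mass K hK out pp pc hpp_sum hpc_sum z]
      · simp [hz]
  calc ∑ z, pi z * ∑ ζ, ∑ k : Fin K, ∑ t : Fin K → T, ∑ t' : Fin K → T,
        Aker K out pp pc z ζ k t t' *
          ((if ζ = z' then 1 else 0) * acc K pi c pO z ζ t t'
            + (if z = z' then 1 else 0) * (1 - acc K pi c pO z ζ t t'))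
      = ∑ z, (pi z * ∑ k : Fin K, ∑ t : Fin K → T, ∑ t' : Fin K → T,
            Aker K out pp pc z z' k t t' * acc K pi c pO z z' t t'
          + pi z * ((if z = z' then 1 else 0)
            * (1 - ∑ ζ, ∑ k : Fin K, ∑ t : Fin K → T, ∑ t' : Fin K → T,
                Aker K out pp pc z ζ k t t' * acc K pi c pO z ζ t t'))) := by
        refine Finset.sum_congr rfl fun z _ => ?_
        rw [hinner z, mul_add]
    _ = (∑ z, pi z * ∑ k : Fin K, ∑ t : Fin K → T, ∑ t' : Fin K → T,
            Aker K out pp pc z z' k t t' * acc K pi c pO z z' t t')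
        + ∑ z, pi z * ((if z = z' then 1 else 0)
            * (1 - ∑ ζ, ∑ k : Fin K, ∑ t : Fin K → T, ∑ t' : Fin K → T,
                Aker K out pp pc z ζ k t t' * acc K pi c pO z ζ t t')) := by
        rw [Finset.sum_add_distrib]
    _ = (∑ z, pi z' * ∑ k : Fin K, ∑ t : Fin K → T, ∑ t' : Fin K → T,
            Aker K out pp pc z' z k t t' * acc K pi c pO z' z t t')
        + pi z' * (1 - ∑ ζ, ∑ k : Fin K, ∑ t : Fin K → T, ∑ t' : Fin K → T,
                Aker K out pp pc z' ζ k t t' * acc K pi c pO z' ζ t t') := by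
        congr 1
        · exact Finset.sum_congr rfl fun z _ => hDB z z'
        · rw [Finset.sum_eq_single z']
          · simp
          · intro z _ hz; simp [hz]
          · intro h; exact absurd (Finset.mem_univ z') h
    _ = pi z' * (∑ ζ, ∑ k : Fin K, ∑ t : Fin K → T, ∑ t' : Fin K → T,
            Aker K out pp pc z' ζ k t t' * acc K pi c pO z' ζ t t')
        + pi z' * (1 - ∑ ζ, ∑ k : Fin K, ∑ t : Fin K → T, ∑ t' : Fin K → T,
                Aker K out pp pc z' ζ k t t' * acc K pi c pO z' ζ t t') := by
        rw [← Finset.mul_sum]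
    _ = pi z' := by ring
end

section
/- Monotonicity of the lower bound in K: for the unbiased estimator ξ̂_K = (1/K)Σ_{k=1}^K X_k where X_1, X_2, ... are i.i.d. positive random variables with E[X_1] = μ, the quantity L_K := E[log ξ̂_K] is nondecreasing in K and satisfies L_K ≤ log μ for all K ≥ 1. -/
open Finset

section Aux

variable {α : Type} [Fintype α]

/-- Jensen's inequality for `Real.log`. -/
lemma jensen_log {ι : Type*} (s : Finset ι) (w p : ι → ℝ)
    (hw : ∀ i ∈ s, 0 ≤ w i) (h1 : ∑ i ∈ s, w i = 1) (hp : ∀ i ∈ s, 0 < p i) :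
    ∑ i ∈ s, w i * Real.log (p i) ≤ Real.log (∑ i ∈ s, w i * p i) := by
  have := (strictConcaveOn_log_Ioi.concaveOn).le_map_sum hw h1
    (fun i hi => Set.mem_Ioi.mpr (hp i hi))
  simpa [smul_eq_mul] using this

lemma sum_prod_one (ν : α → ℝ) (hν_sum : ∑ a, ν a = 1) (n : ℕ) :
    ∑ t : Fin n → α, ∏ k, ν (t k) = 1 := by
  have h := Finset.prod_univ_sum (fun _ : Fin n => (Finset.univ : Finset α))
      (fun _ a => ν a)
  rw [Fintype.piFinset_univ] at h
  rw [← h]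
  simp [hν_sum]

lemma split_sum {m : ℕ} (j : Fin (m+1)) (F : (Fin (m+1) → α) → ℝ) :
    ∑ t : Fin (m+1) → α, F t
      = ∑ a : α, ∑ s : Fin m → α, F (Fin.insertNth (α := fun _ => α) j a s) := by
  rw [← Equiv.sum_comp (Fin.insertNthEquiv (fun _ => α) j) F, Fintype.sum_prod_type]
  rfl

lemma prod_insertNth (ν : α → ℝ) {m : ℕ} (j : Fin (m+1)) (a : α) (s : Fin m → α) :
    ∏ k, ν (Fin.insertNth (α := fun _ => α) j a s k) = ν a * ∏ k, ν (s k) := by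
  rw [Fin.prod_univ_succAbove _ j]
  simp

lemma marg (ν : α → ℝ) (hν_sum : ∑ a, ν a = 1) {m : ℕ} (j : Fin (m+1)) (G : α → ℝ) :
    ∑ t : Fin (m+1) → α, (∏ k, ν (t k)) * G (t j) = ∑ a, ν a * G a := by
  rw [split_sum j (fun t : Fin (m+1) → α => (∏ k, ν (t k)) * G (t j))]
  have h : ∀ a : α, ∑ s : Fin m → α,
      (∏ k, ν (Fin.insertNth (α := fun _ => α) j a s k))
        * G (Fin.insertNth (α := fun _ => α) j a s j)
      = ν a * G a := by
    intro a
    have h2 : ∀ s : Fin m → α,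
        (∏ k, ν (Fin.insertNth (α := fun _ => α) j a s k))
          * G (Fin.insertNth (α := fun _ => α) j a s j)
        = (ν a * G a) * ∏ k, ν (s k) := by
      intro s
      rw [prod_insertNth, Fin.insertNth_apply_same]
      ring
    rw [Finset.sum_congr rfl (fun s _ => h2 s), ← Finset.mul_sum,
      sum_prod_one ν hν_sum, mul_one]
  rw [Finset.sum_congr rfl (fun a _ => h a)]

lemma marg2 (ν : α → ℝ) (hν_sum : ∑ a, ν a = 1) {m : ℕ} (j : Fin (m+1))
    (F : (Fin m → α) → ℝ) :
    ∑ t : Fin (m+1) → α, (∏ k, ν (t k)) * F (fun k => t (j.succAbove k))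
      = ∑ s : Fin m → α, (∏ k, ν (s k)) * F s := by
  rw [split_sum j
    (fun t : Fin (m+1) → α => (∏ k, ν (t k)) * F (fun k => t (j.succAbove k)))]
  have h : ∀ a : α, ∑ s : Fin m → α,
      (∏ k, ν (Fin.insertNth (α := fun _ => α) j a s k))
        * F (fun k => Fin.insertNth (α := fun _ => α) j a s (j.succAbove k))
      = ν a * ∑ s : Fin m → α, (∏ k, ν (s k)) * F s := by
    intro a
    rw [Finset.mul_sum]
    refine Finset.sum_congr rfl fun s _ => ?_
    rw [prod_insertNth]
    have h3 : (fun k => Fin.insertNth (α := fun _ => α) j a s (j.succAbove k)) = s := by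
      funext k; exact Fin.insertNth_apply_succAbove (α := fun _ => α) j a s k
    rw [h3]; ring
  rw [Finset.sum_congr rfl (fun a _ => h a), ← Finset.sum_mul, hν_sum, one_mul]

end Aux

/-- The quantity `L_K = E[log((1/K)∑_{k<K} X_k)]` for i.i.d. draws from a finitely
supported distribution `ν` on `α`, with values `X : α → ℝ`. -/
noncomputable def Lb {α : Type} [Fintype α] (ν X : α → ℝ) (K : ℕ) : ℝ :=
  ∑ t : Fin K → α, (∏ k, ν (t k)) * Real.log ((K : ℝ)⁻¹ * ∑ k, X (t k))

/-- Monotonicity of the lower bound in `K`.  For the unbiased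
estimator `ξ̂_K = (1/K)∑_{k=1}^K X_k` where `X_1, X_2, …` are i.i.d. positive
random variables (finitely many positive values, drawn from pmf `ν`) with mean
`μ = ∑_a ν(a) X(a)`, the quantity `L_K = E[log ξ̂_K]` is nondecreasing in `K`
and satisfies `L_K ≤ log μ` for all `K ≥ 1`. -/
theorem stmt14_lower_bound_monotone
    {α : Type} [Fintype α] (ν X : α → ℝ)
    (hν_nonneg : ∀ a, 0 ≤ ν a)
    (hν_sum : ∑ a, ν a = 1)
    (hX_pos : ∀ a, 0 < X a) :
    ∀ K : ℕ, 0 < K →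
      Lb ν X K ≤ Lb ν X (K + 1) ∧ Lb ν X K ≤ Real.log (∑ a, ν a * X a) := by
  intro K hK
  obtain ⟨m, rfl⟩ : ∃ m, K = m + 1 := ⟨K - 1, (Nat.succ_pred_eq_of_pos hK).symm⟩
  have hw : ∀ {n : ℕ} (t : Fin n → α), 0 ≤ ∏ k, ν (t k) :=
    fun t => Finset.prod_nonneg (fun k _ => hν_nonneg _)
  have hppos : ∀ {n : ℕ}, 0 < n → ∀ (t : Fin n → α), 0 < ((n:ℝ))⁻¹ * ∑ k, X (t k) := by
    intro n hn t
    have h1 : 0 < ∑ k, X (t k) :=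
      Finset.sum_pos (fun k _ => hX_pos _) (by
        have : Nonempty (Fin n) := Fin.pos_iff_nonempty.mp hn
        exact Finset.univ_nonempty)
    have h2 : (0:ℝ) < (n:ℝ) := by exact_mod_cast hn
    positivity
  constructor
  · -- monotonicity
    have key : ∀ t : Fin (m+1+1) → α,
        ((m+1+1 : ℕ):ℝ)⁻¹ * ∑ j : Fin (m+1+1),
          Real.log (((m+1 : ℕ):ℝ)⁻¹ * ∑ k : Fin (m+1), X (t (j.succAbove k)))
        ≤ Real.log (((m+1+1 : ℕ):ℝ)⁻¹ * ∑ k, X (t k)) := by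
      intro t
      have hwj : ∀ j ∈ (Finset.univ : Finset (Fin (m+1+1))),
          (0:ℝ) ≤ ((m+1+1 : ℕ):ℝ)⁻¹ := fun _ _ => by positivity
      have h1 : ∑ _j : Fin (m+1+1), ((m+1+1 : ℕ):ℝ)⁻¹ = 1 := by
        rw [Finset.sum_const, Finset.card_univ, Fintype.card_fin, nsmul_eq_mul,
          mul_inv_cancel₀]
        positivity
      have hpj : ∀ j ∈ (Finset.univ : Finset (Fin (m+1+1))),
          0 < ((m+1 : ℕ):ℝ)⁻¹ * ∑ k : Fin (m+1), X (t (j.succAbove k)) :=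
        fun j _ => hppos (Nat.succ_pos m) _
      have hj : ∑ j : Fin (m+1+1), ((m+1+1 : ℕ):ℝ)⁻¹ *
            Real.log (((m+1 : ℕ):ℝ)⁻¹ * ∑ k : Fin (m+1), X (t (j.succAbove k)))
          ≤ Real.log (∑ j : Fin (m+1+1), ((m+1+1 : ℕ):ℝ)⁻¹ *
            (((m+1 : ℕ):ℝ)⁻¹ * ∑ k : Fin (m+1), X (t (j.succAbove k)))) :=
        jensen_log Finset.univ (fun _ : Fin (m+1+1) => ((m+1+1 : ℕ):ℝ)⁻¹)
          (fun j => ((m+1 : ℕ):ℝ)⁻¹ * ∑ k : Fin (m+1), X (t (j.succAbove k)))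
          hwj h1 hpj
      rw [Finset.mul_sum]
      refine hj.trans_eq ?_
      congr 1
      have hsab : ∀ j : Fin (m+1+1),
          ((m+1+1 : ℕ):ℝ)⁻¹ * (((m+1 : ℕ):ℝ)⁻¹ * ∑ k : Fin (m+1), X (t (j.succAbove k)))
          = ((m+1+1 : ℕ):ℝ)⁻¹ * ((m+1 : ℕ):ℝ)⁻¹ * ((∑ k, X (t k)) - X (t j)) := by
        intro j
        have h4 := Fin.sum_univ_succAbove (fun k => X (t k)) j
        have h5 : ∑ k : Fin (m+1), X (t (j.succAbove k)) = (∑ k, X (t k)) - X (t j) := by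
          linarith
        rw [h5]; ring
      rw [Finset.sum_congr rfl (fun j _ => hsab j)]
      rw [← Finset.mul_sum, Finset.sum_sub_distrib,
        Finset.sum_const, Finset.card_univ, Fintype.card_fin]
      push_cast
      have hm1 : ((m:ℝ)+1) ≠ 0 := by positivity
      have hm2 : ((m:ℝ)+1+1) ≠ 0 := by positivity
      field_simp
      ring
    have step1 : ∑ t : Fin (m+1+1) → α, (∏ k, ν (t k)) *
        (((m+1+1 : ℕ):ℝ)⁻¹ * ∑ j : Fin (m+1+1),
          Real.log (((m+1 : ℕ):ℝ)⁻¹ * ∑ k : Fin (m+1), X (t (j.succAbove k))))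
        ≤ Lb ν X (m+1+1) := by
      unfold Lb
      refine Finset.sum_le_sum fun t _ => ?_
      exact mul_le_mul_of_nonneg_left (key t) (hw t)
    refine le_trans (le_of_eq ?_) step1
    have swap : ∑ t : Fin (m+1+1) → α, (∏ k, ν (t k)) *
        (((m+1+1 : ℕ):ℝ)⁻¹ * ∑ j : Fin (m+1+1),
          Real.log (((m+1 : ℕ):ℝ)⁻¹ * ∑ k : Fin (m+1), X (t (j.succAbove k))))
        = ((m+1+1 : ℕ):ℝ)⁻¹ * ∑ j : Fin (m+1+1), ∑ t : Fin (m+1+1) → α,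
            (∏ k, ν (t k)) *
              Real.log (((m+1 : ℕ):ℝ)⁻¹ * ∑ k : Fin (m+1), X (t (j.succAbove k))) := by
      calc ∑ t : Fin (m+1+1) → α, (∏ k, ν (t k)) *
            (((m+1+1 : ℕ):ℝ)⁻¹ * ∑ j : Fin (m+1+1),
              Real.log (((m+1 : ℕ):ℝ)⁻¹ * ∑ k : Fin (m+1), X (t (j.succAbove k))))
          = ∑ t : Fin (m+1+1) → α, ∑ j : Fin (m+1+1), ((m+1+1 : ℕ):ℝ)⁻¹ *
              ((∏ k, ν (t k)) *
                Real.log (((m+1 : ℕ):ℝ)⁻¹ * ∑ k : Fin (m+1), X (t (j.succAbove k)))) := by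
            refine Finset.sum_congr rfl fun t _ => ?_
            rw [Finset.mul_sum, Finset.mul_sum]
            exact Finset.sum_congr rfl fun j _ => by ring
        _ = ∑ j : Fin (m+1+1), ∑ t : Fin (m+1+1) → α, ((m+1+1 : ℕ):ℝ)⁻¹ *
              ((∏ k, ν (t k)) *
                Real.log (((m+1 : ℕ):ℝ)⁻¹ * ∑ k : Fin (m+1), X (t (j.succAbove k)))) :=
            Finset.sum_comm
        _ = _ := by
            rw [Finset.mul_sum]
            exact Finset.sum_congr rfl fun j _ => (Finset.mul_sum _ _ _).symm
    rw [swap]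
    have hmargj : ∀ j : Fin (m+1+1), ∑ t : Fin (m+1+1) → α,
        (∏ k, ν (t k)) *
          Real.log (((m+1 : ℕ):ℝ)⁻¹ * ∑ k : Fin (m+1), X (t (j.succAbove k)))
        = Lb ν X (m+1) :=
      fun j => marg2 ν hν_sum j
        (fun s => Real.log (((m+1 : ℕ):ℝ)⁻¹ * ∑ k, X (s k)))
    rw [Finset.sum_congr rfl (fun j _ => hmargj j), Finset.sum_const,
      Finset.card_univ, Fintype.card_fin, nsmul_eq_mul, ← mul_assoc,
      inv_mul_cancel₀, one_mul]
    positivity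
  · -- L_K ≤ log μ
    have hjen : ∑ t : Fin (m+1) → α,
          (∏ k, ν (t k)) * Real.log (((m+1 : ℕ):ℝ)⁻¹ * ∑ k, X (t k))
        ≤ Real.log (∑ t : Fin (m+1) → α,
          (∏ k, ν (t k)) * (((m+1 : ℕ):ℝ)⁻¹ * ∑ k, X (t k))) :=
      jensen_log Finset.univ (fun t : Fin (m+1) → α => ∏ k, ν (t k))
        (fun t => ((m+1 : ℕ):ℝ)⁻¹ * ∑ k, X (t k))
        (fun t _ => hw t) (sum_prod_one ν hν_sum (m+1))
        (fun t _ => hppos (Nat.succ_pos m) t)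
    refine hjen.trans_eq ?_
    congr 1
    have hstep : ∀ t : Fin (m+1) → α, (∏ k, ν (t k)) * (((m+1 : ℕ):ℝ)⁻¹ * ∑ k, X (t k))
        = ((m+1 : ℕ):ℝ)⁻¹ * ∑ k : Fin (m+1), (∏ j, ν (t j)) * X (t k) := by
      intro t
      rw [Finset.mul_sum, Finset.mul_sum, Finset.mul_sum]
      exact Finset.sum_congr rfl fun k _ => by ring
    rw [Finset.sum_congr rfl (fun t _ => hstep t), ← Finset.mul_sum, Finset.sum_comm]
    rw [Finset.sum_congr rfl (fun k (_ : k ∈ (Finset.univ : Finset (Fin (m+1)))) =>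
      marg ν hν_sum k X), Finset.sum_const, Finset.card_univ, Fintype.card_fin,
      nsmul_eq_mul, ← mul_assoc, inv_mul_cancel₀, one_mul]
    positivity
end

section
/- Unbiasedness of the gradient estimator: with τ_{1:K} i.i.d. from p(·;x,θ,z), the estimator g + h, where g = Σ_k (log ξ̂(τ_{1:K}) − log ξ̂(τ_{−k})) ∇_θ log p_I(τ_k;x,θ) and h = ∇_θ log ξ̂(τ_{1:K}) (with ξ̂(τ_{1:K}) = (1/K)Σ_k p_O(τ_k;x,θ) and ξ̂(τ_{−k}) = (1/(K−1))Σ_{j≠k} p_O(τ_j;x,θ)), satisfies E[g + h] = ∇_θ E_{τ_{1:K}}[log ξ̂(τ_{1:K})]. -/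
lemma baseline_zero {T : Type} [Fintype T] [Nonempty T] {K : ℕ}
    {M : Type} [AddCommGroup M] [Module ℝ M]
    (k : Fin K) (w : (Fin K → T) → ℝ)
    (hw : ∀ (t : Fin K → T) (a : T), w (Function.update t k a) = w t)
    (v : T → M) (hv : ∑ a, v a = 0) :
    ∑ t : Fin K → T, w t • v (t k) = 0 := by
  classical
  obtain ⟨a₀⟩ := ‹Nonempty T›
  set e := Equiv.funSplitAt k T with he
  have h1 : ∑ t : Fin K → T, w t • v (t k)
      = ∑ p : T × ({ j // j ≠ k } → T), w (e.symm p) • v ((e.symm p) k) :=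
    (Equiv.sum_comp e.symm (fun t => w t • v (t k))).symm
  have hk : ∀ (a : T) (r : { j // j ≠ k } → T), (e.symm (a, r)) k = a := by
    intro a r
    simp [he, Equiv.funSplitAt, Equiv.piSplitAt]
  have hupd : ∀ (a b : T) (r : { j // j ≠ k } → T),
      e.symm (a, r) = Function.update (e.symm (b, r)) k a := by
    intro a b r
    funext j
    by_cases hj : j = k
    · subst hj; simp [hk, Function.update_self]
    · simp [he, Function.update_of_ne hj, Equiv.funSplitAt, Equiv.piSplitAt, hj]
  have hw2 : ∀ (a : T) (r : { j // j ≠ k } → T), w (e.symm (a, r)) = w (e.symm (a₀, r)) := by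
    intro a r
    rw [hupd a a₀ r, hw]
  rw [h1, Fintype.sum_prod_type_right]
  have : ∀ r : { j // j ≠ k } → T,
      (∑ a : T, w (e.symm (a, r)) • v ((e.symm (a, r)) k)) = 0 := by
    intro r
    have : (∑ a : T, w (e.symm (a, r)) • v ((e.symm (a, r)) k))
        = w (e.symm (a₀, r)) • ∑ a : T, v a := by
      rw [Finset.smul_sum]
      exact Finset.sum_congr rfl fun a _ => by rw [hw2, hk]
    rw [this, hv, smul_zero]
  simp [this]

/-- Unbiasedness of the gradient estimator `g + h` of Algorithm 3.
Traces `τ` range over the finite support of `p(·;x,θ,z)`, whose pmf is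
`pI θ τ = p_I(τ;x,θ)` (probability of the internal choices with outputs fixed to
`z`); `pO θ τ = p_O(τ;x,θ)` so that `p(τ;x,θ) = pO θ τ · pI θ τ`.  With
`τ_{1:K}` i.i.d. from `pI θ₀` (`K ≥ 2`),
`ξ̂(τ_{1:K}) = (1/K)∑_k pO θ (τ_k)` and
`ξ̂(τ_{−k}) = (1/(K−1))∑_{j≠k} pO θ (τ_j)`, the estimator
`g + h`, where
`g = ∑_k (log ξ̂(τ_{1:K}) − log ξ̂(τ_{−k})) • ∇_θ log pI θ (τ_k)` and
`h = ∇_θ log ξ̂(τ_{1:K})`, satisfies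
`E[g + h] = ∇_θ E_{τ_{1:K}}[log ξ̂(τ_{1:K})]` at `θ₀`. -/
theorem stmt16_gradient_estimator_unbiased
    {T : Type} [Fintype T] {d : ℕ}
    (K : ℕ) (hK : 2 ≤ K)
    (pI pO : (Fin d → ℝ) → T → ℝ)
    (U : Set (Fin d → ℝ)) (hU : IsOpen U) (θ₀ : Fin d → ℝ) (hθ₀ : θ₀ ∈ U)
    (hI_sum : ∀ θ ∈ U, ∑ τ, pI θ τ = 1)
    (hI_pos : ∀ θ ∈ U, ∀ τ, 0 < pI θ τ)
    (hO_pos : ∀ θ ∈ U, ∀ τ, 0 < pO θ τ)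
    (hI_diff : ∀ τ, DifferentiableAt ℝ (fun θ => pI θ τ) θ₀)
    (hO_diff : ∀ τ, DifferentiableAt ℝ (fun θ => pO θ τ) θ₀) :
    ∑ t : Fin K → T, (∏ k, pI θ₀ (t k)) •
        ((∑ k, (Real.log ((K : ℝ)⁻¹ * ∑ j, pO θ₀ (t j))
              - Real.log (((K : ℝ) - 1)⁻¹ * ∑ j ∈ Finset.univ.erase k, pO θ₀ (t j)))
            • fderiv ℝ (fun θ => Real.log (pI θ (t k))) θ₀)
          + fderiv ℝ (fun θ => Real.log ((K : ℝ)⁻¹ * ∑ k, pO θ (t k))) θ₀)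
      = fderiv ℝ (fun θ =>
          ∑ t : Fin K → T, (∏ k, pI θ (t k))
            * Real.log ((K : ℝ)⁻¹ * ∑ k, pO θ (t k))) θ₀ := by
  classical
  have hposI : ∀ τ, 0 < pI θ₀ τ := hI_pos θ₀ hθ₀
  have hposO : ∀ τ, 0 < pO θ₀ τ := hO_pos θ₀ hθ₀
  haveI hTne : Nonempty T := by
    by_contra h
    rw [not_nonempty_iff] at h
    have := hI_sum θ₀ hθ₀
    simp [Finset.univ_eq_empty] at this
  haveI hFKne : Nonempty (Fin K) := Fin.pos_iff_nonempty.mp (by omega)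
  set D : T → (Fin d → ℝ) →L[ℝ] ℝ := fun τ => fderiv ℝ (fun θ => pI θ τ) θ₀ with hDdef
  set O' : T → (Fin d → ℝ) →L[ℝ] ℝ := fun τ => fderiv ℝ (fun θ => pO θ τ) θ₀ with hOdef
  have hDf : ∀ τ, HasFDerivAt (fun θ => pI θ τ) (D τ) θ₀ := fun τ => (hI_diff τ).hasFDerivAt
  have hOf : ∀ τ, HasFDerivAt (fun θ => pO θ τ) (O' τ) θ₀ := fun τ => (hO_diff τ).hasFDerivAt
  have hlog : ∀ τ, HasFDerivAt (fun θ => Real.log (pI θ τ)) ((pI θ₀ τ)⁻¹ • D τ) θ₀ :=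
    fun τ => (hDf τ).log (hposI τ).ne'
  have hDlog : ∀ τ, fderiv ℝ (fun θ => Real.log (pI θ τ)) θ₀ = (pI θ₀ τ)⁻¹ • D τ :=
    fun τ => (hlog τ).fderiv
  -- zero expected score
  have hscore : ∑ τ, D τ = 0 := by
    have h1 : HasFDerivAt (fun θ => ∑ τ : T, pI θ τ) (∑ τ, D τ) θ₀ :=
      HasFDerivAt.fun_sum fun τ _ => hDf τ
    have h2 : (fun θ => ∑ τ : T, pI θ τ) =ᶠ[nhds θ₀] (fun _ => (1 : ℝ)) := by
      filter_upwards [hU.mem_nhds hθ₀] with θ hθ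
      exact hI_sum θ hθ
    calc ∑ τ, D τ = fderiv ℝ (fun θ => ∑ τ : T, pI θ τ) θ₀ := h1.fderiv.symm
      _ = fderiv ℝ (fun _ => (1 : ℝ)) θ₀ := h2.fderiv_eq
      _ = 0 := fderiv_const_apply 1
  -- the mixture ξ̂ and its log-derivative
  have hKpos : (0 : ℝ) < (K : ℝ) := by exact_mod_cast (by omega : 0 < K)
  have hξpos : ∀ t : Fin K → T, 0 < (K : ℝ)⁻¹ * ∑ k, pO θ₀ (t k) := fun t =>
    mul_pos (inv_pos.mpr hKpos)
      (Finset.sum_pos (fun k _ => hposO (t k)) Finset.univ_nonempty)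
  have hS : ∀ t : Fin K → T,
      HasFDerivAt (fun θ => (K : ℝ)⁻¹ * ∑ k, pO θ (t k))
        ((K : ℝ)⁻¹ • ∑ k, O' (t k)) θ₀ := fun t =>
    (HasFDerivAt.fun_sum fun k _ => hOf (t k)).const_mul _
  have hL : ∀ t : Fin K → T,
      HasFDerivAt (fun θ => Real.log ((K : ℝ)⁻¹ * ∑ k, pO θ (t k)))
        (((K : ℝ)⁻¹ * ∑ k, pO θ₀ (t k))⁻¹ • ((K : ℝ)⁻¹ • ∑ k, O' (t k))) θ₀ :=
    fun t => (hS t).log (hξpos t).ne'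
  have hLf : ∀ t : Fin K → T,
      fderiv ℝ (fun θ => Real.log ((K : ℝ)⁻¹ * ∑ k, pO θ (t k))) θ₀
        = ((K : ℝ)⁻¹ * ∑ k, pO θ₀ (t k))⁻¹ • ((K : ℝ)⁻¹ • ∑ k, O' (t k)) :=
    fun t => (hL t).fderiv
  -- derivative of the product
  have hP : ∀ t : Fin K → T,
      HasFDerivAt (fun θ => ∏ k, pI θ (t k))
        (∑ k, (∏ j ∈ Finset.univ.erase k, pI θ₀ (t j)) • D (t k)) θ₀ := fun t =>
    HasFDerivAt.finset_prod fun k _ => hDf (t k)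
  -- derivative of the RHS
  have hRHS : HasFDerivAt
      (fun θ => ∑ t : Fin K → T, (∏ k, pI θ (t k))
          * Real.log ((K : ℝ)⁻¹ * ∑ k, pO θ (t k)))
      (∑ t : Fin K → T,
        ((∏ k, pI θ₀ (t k)) • (((K : ℝ)⁻¹ * ∑ k, pO θ₀ (t k))⁻¹ • ((K : ℝ)⁻¹ • ∑ k, O' (t k)))
          + Real.log ((K : ℝ)⁻¹ * ∑ k, pO θ₀ (t k))
            • ∑ k, (∏ j ∈ Finset.univ.erase k, pI θ₀ (t j)) • D (t k))) θ₀ :=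
    HasFDerivAt.fun_sum fun t _ => (hP t).mul (hL t)
  rw [hRHS.fderiv]
  simp only [hDlog, hLf]
  -- per-trace identity
  have hPe : ∀ (t : Fin K → T) (k : Fin K),
      (∏ j, pI θ₀ (t j)) * (pI θ₀ (t k))⁻¹ = ∏ j ∈ Finset.univ.erase k, pI θ₀ (t j) := by
    intro t k
    rw [← Finset.mul_prod_erase Finset.univ (fun j => pI θ₀ (t j)) (Finset.mem_univ k),
      mul_comm (pI θ₀ (t k)), mul_inv_cancel_right₀ (hposI (t k)).ne']
  have step : ∀ t : Fin K → T,
      (∏ k, pI θ₀ (t k)) •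
        ((∑ k, (Real.log ((K : ℝ)⁻¹ * ∑ j, pO θ₀ (t j))
              - Real.log (((K : ℝ) - 1)⁻¹ * ∑ j ∈ Finset.univ.erase k, pO θ₀ (t j)))
            • ((pI θ₀ (t k))⁻¹ • D (t k)))
          + ((K : ℝ)⁻¹ * ∑ k, pO θ₀ (t k))⁻¹ • ((K : ℝ)⁻¹ • ∑ k, O' (t k)))
      = ((∏ k, pI θ₀ (t k)) • (((K : ℝ)⁻¹ * ∑ k, pO θ₀ (t k))⁻¹ • ((K : ℝ)⁻¹ • ∑ k, O' (t k)))
          + Real.log ((K : ℝ)⁻¹ * ∑ k, pO θ₀ (t k))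
            • ∑ k, (∏ j ∈ Finset.univ.erase k, pI θ₀ (t j)) • D (t k))
        + ∑ k, (-((∏ j ∈ Finset.univ.erase k, pI θ₀ (t j))
            * Real.log (((K : ℝ) - 1)⁻¹ * ∑ j ∈ Finset.univ.erase k, pO θ₀ (t j)))) • D (t k) := by
    intro t
    rw [smul_add]
    have hA : (∏ k, pI θ₀ (t k)) •
        (∑ k, (Real.log ((K : ℝ)⁻¹ * ∑ j, pO θ₀ (t j))
              - Real.log (((K : ℝ) - 1)⁻¹ * ∑ j ∈ Finset.univ.erase k, pO θ₀ (t j)))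
            • ((pI θ₀ (t k))⁻¹ • D (t k)))
        = Real.log ((K : ℝ)⁻¹ * ∑ k, pO θ₀ (t k))
            • ∑ k, (∏ j ∈ Finset.univ.erase k, pI θ₀ (t j)) • D (t k)
          + ∑ k, (-((∏ j ∈ Finset.univ.erase k, pI θ₀ (t j))
            * Real.log (((K : ℝ) - 1)⁻¹ * ∑ j ∈ Finset.univ.erase k, pO θ₀ (t j)))) • D (t k) := by
      rw [Finset.smul_sum, Finset.smul_sum, ← Finset.sum_add_distrib]
      refine Finset.sum_congr rfl fun k _ => ?_
      rw [smul_smul, smul_smul, smul_smul, ← add_smul]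
      congr 1
      have h := hPe t k
      calc (∏ j, pI θ₀ (t j)) *
            (Real.log ((K : ℝ)⁻¹ * ∑ j, pO θ₀ (t j))
              - Real.log (((K : ℝ) - 1)⁻¹ * ∑ j ∈ Finset.univ.erase k, pO θ₀ (t j)))
              * (pI θ₀ (t k))⁻¹
          = ((∏ j, pI θ₀ (t j)) * (pI θ₀ (t k))⁻¹) *
              (Real.log ((K : ℝ)⁻¹ * ∑ j, pO θ₀ (t j))
              - Real.log (((K : ℝ) - 1)⁻¹ * ∑ j ∈ Finset.univ.erase k, pO θ₀ (t j))) := by ring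
        _ = (∏ j ∈ Finset.univ.erase k, pI θ₀ (t j)) *
              (Real.log ((K : ℝ)⁻¹ * ∑ j, pO θ₀ (t j))
              - Real.log (((K : ℝ) - 1)⁻¹ * ∑ j ∈ Finset.univ.erase k, pO θ₀ (t j))) := by
            rw [h]
        _ = _ := by ring
    rw [hA]
    abel
  rw [Finset.sum_congr rfl fun t _ => step t, Finset.sum_add_distrib]
  have hZ : ∑ t : Fin K → T, ∑ k, (-((∏ j ∈ Finset.univ.erase k, pI θ₀ (t j))
      * Real.log (((K : ℝ) - 1)⁻¹ * ∑ j ∈ Finset.univ.erase k, pO θ₀ (t j)))) • D (t k) = 0 := by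
    rw [Finset.sum_comm]
    refine Finset.sum_eq_zero fun k _ => ?_
    refine baseline_zero k _ ?_ D hscore
    intro t a
    have h1 : ∀ j ∈ Finset.univ.erase k, Function.update t k a j = t j := fun j hj =>
      Function.update_of_ne (Finset.ne_of_mem_erase hj) a t
    have hp : (∏ j ∈ Finset.univ.erase k, pI θ₀ (Function.update t k a j))
        = ∏ j ∈ Finset.univ.erase k, pI θ₀ (t j) :=
      Finset.prod_congr rfl fun j hj => by rw [h1 j hj]
    have hs : (∑ j ∈ Finset.univ.erase k, pO θ₀ (Function.update t k a j))
        = ∑ j ∈ Finset.univ.erase k, pO θ₀ (t j) :=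
      Finset.sum_congr rfl fun j hj => by rw [h1 j hj]
    simp only [hp, hs]
  rw [hZ, add_zero]
end
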